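/- Let n ≥ 1, let x ∈ ℝⁿ, let τ > 0, and let k be a real number with 0 < k < n. The function ν ↦ Σᵢ σ((xᵢ + ν)/τ) is continuous and strictly increasing on ℝ, tends to 0 as ν → −∞ and to n as ν → +∞, and hence there exists a unique ν* ∈ ℝ with Σᵢ σ((xᵢ + ν*)/τ) = k. -/

import Mathlib

open Finset Filter

/-- The sigmoid function `σ(t) = 1 / (1 + exp (-t))`. -/
noncomputable def sigmoid (t : ℝ) : ℝ := 1 / (1 + Real.exp (-t))

lemma sigmoid_pos_denom (t : ℝ) : 0 < 1 + Real.exp (-t) := by positivity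

lemma sigmoid_continuous : Continuous sigmoid := by
  unfold sigmoid
  exact continuous_const.div (by continuity) (fun t => (sigmoid_pos_denom t).ne')

lemma sigmoid_strictMono : StrictMono sigmoid := by
  intro s t hst
  unfold sigmoid
  apply one_div_lt_one_div_of_lt (sigmoid_pos_denom t)
  have := Real.exp_lt_exp.mpr (neg_lt_neg hst)
  linarith

lemma sigmoid_tendsto_atBot : Tendsto sigmoid atBot (nhds 0) := by
  unfold sigmoid
  have h1 : Tendsto (fun t : ℝ => 1 + Real.exp (-t)) atBot atTop := by
    apply tendsto_atTop_add_const_left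
    exact Real.tendsto_exp_atTop.comp tendsto_neg_atBot_atTop
  simp only [one_div]
  exact h1.inv_tendsto_atTop

lemma sigmoid_tendsto_atTop : Tendsto sigmoid atTop (nhds 1) := by
  unfold sigmoid
  have h1 : Tendsto (fun t : ℝ => 1 + Real.exp (-t)) atTop (nhds 1) := by
    have := Real.tendsto_exp_atBot.comp tendsto_neg_atTop_atBot
    simpa using tendsto_const_nhds.add this
  simpa [one_div] using h1.inv₀ one_ne_zero

theorem lml_dual_function_properties (n : ℕ) (hn : 1 ≤ n) (x : Fin n → ℝ)
    (τ : ℝ) (hτ : 0 < τ) (k : ℝ) (hk0 : 0 < k) (hkn : k < n) :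
    Continuous (fun ν : ℝ => ∑ i, sigmoid ((x i + ν) / τ)) ∧
    StrictMono (fun ν : ℝ => ∑ i, sigmoid ((x i + ν) / τ)) ∧
    Tendsto (fun ν : ℝ => ∑ i, sigmoid ((x i + ν) / τ)) atBot (nhds 0) ∧
    Tendsto (fun ν : ℝ => ∑ i, sigmoid ((x i + ν) / τ)) atTop (nhds n) ∧
    (∃! ν : ℝ, (∑ i, sigmoid ((x i + ν) / τ)) = k) := by
  set f : ℝ → ℝ := fun ν => ∑ i, sigmoid ((x i + ν) / τ) with hf
  have hcont : Continuous f := by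
    apply continuous_finset_sum
    intro i _
    exact sigmoid_continuous.comp ((continuous_const.add continuous_id).div_const τ)
  have hmono : StrictMono f := by
    intro a b hab
    apply Finset.sum_lt_sum_of_nonempty
    · exact Finset.univ_nonempty_iff.mpr (Fin.pos_iff_nonempty.mp hn)
    · intro i _
      exact sigmoid_strictMono (by apply div_lt_div_of_pos_right _ hτ; linarith)
  have hbot : Tendsto f atBot (nhds 0) := by
    have : Tendsto f atBot (nhds (∑ _i : Fin n, (0:ℝ))) := by
      apply tendsto_finset_sum
      intro i _
      apply sigmoid_tendsto_atBot.comp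
      apply Tendsto.atBot_div_const hτ
      exact tendsto_atBot_add_const_left _ _ tendsto_id
    simpa using this
  have htop : Tendsto f atTop (nhds n) := by
    have : Tendsto f atTop (nhds (∑ _i : Fin n, (1:ℝ))) := by
      apply tendsto_finset_sum
      intro i _
      apply sigmoid_tendsto_atTop.comp
      apply Tendsto.atTop_div_const hτ
      exact tendsto_atTop_add_const_left _ _ tendsto_id
    simpa using this
  refine ⟨hcont, hmono, hbot, htop, ?_⟩
  obtain ⟨a, ha⟩ := (hbot.eventually (eventually_lt_nhds hk0)).exists
  obtain ⟨b, hb⟩ := (htop.eventually (eventually_gt_nhds hkn)).exists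
  have hab : a ≤ b := by
    by_contra h
    push_neg at h
    have := hmono h
    linarith
  obtain ⟨ν, _, hν⟩ := intermediate_value_Icc hab hcont.continuousOn
    ⟨le_of_lt ha, le_of_lt hb⟩
  exact ⟨ν, hν, fun y hy => hmono.injective (hy.trans hν.symm)⟩
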